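/- Gradient norm ratios do not equalize in the gradient flow: for constants c_ℓ, c_k > 0 and k₀ > 0, the gradient norm ratio (c_ℓ/(2c_ℓ²t + k₀)^{1/4}) · ((2c_k²t + k₀)^{1/4}/c_k) converges to √(c_ℓ/c_k) as t → ∞, i.e. the initial ratio c_ℓ/c_k is reduced exactly to its square root in the infinite time limit. -/

import Mathlib

/-- Gradient norm ratios do not equalize in the gradient flow: the ratio
tends to `√(c_ℓ / c_k)`, the square root of its initial value. -/
theorem gradient_norm_ratio_tendsto_sqrt
    (cl ck k0 : ℝ) (hcl : 0 < cl) (hck : 0 < ck) (hk0 : 0 < k0) :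
    Filter.Tendsto
      (fun t : ℝ =>
        cl / (2 * cl ^ 2 * t + k0) ^ ((1 : ℝ) / 4) *
          ((2 * ck ^ 2 * t + k0) ^ ((1 : ℝ) / 4) / ck))
      Filter.atTop (nhds (Real.sqrt (cl / ck))) := by
  have hcl2 : (0:ℝ) < 2 * cl ^ 2 := by positivity
  have hck2 : (0:ℝ) < 2 * ck ^ 2 := by positivity
  -- limit of the inner quotient
  have hq : Filter.Tendsto (fun t : ℝ => (2 * ck ^ 2 * t + k0) / (2 * cl ^ 2 * t + k0))
      Filter.atTop (nhds (ck ^ 2 / cl ^ 2)) := by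
    have h1 : Filter.Tendsto (fun t : ℝ => (2 * ck ^ 2 + k0 / t) / (2 * cl ^ 2 + k0 / t))
        Filter.atTop (nhds ((2 * ck ^ 2 + 0) / (2 * cl ^ 2 + 0))) := by
      have hz : Filter.Tendsto (fun t : ℝ => k0 / t) Filter.atTop (nhds 0) :=
        Filter.Tendsto.div_atTop tendsto_const_nhds Filter.tendsto_id
      exact ((tendsto_const_nhds.add hz).div (tendsto_const_nhds.add hz)
        (by positivity))
    have h2 : (2 * ck ^ 2 + 0) / (2 * cl ^ 2 + 0) = ck ^ 2 / cl ^ 2 := by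
      rw [add_zero, add_zero]
      field_simp
    rw [h2] at h1
    refine h1.congr' ?_
    filter_upwards [Filter.eventually_gt_atTop (0:ℝ)] with t ht
    field_simp
  -- raise to the power 1/4 and multiply by constant
  have hmain : Filter.Tendsto
      (fun t : ℝ => cl / ck * ((2 * ck ^ 2 * t + k0) / (2 * cl ^ 2 * t + k0)) ^ ((1:ℝ)/4))
      Filter.atTop (nhds (cl / ck * (ck ^ 2 / cl ^ 2) ^ ((1:ℝ)/4))) := by
    exact (hq.rpow_const (Or.inl (by positivity))).const_mul _
  have hx : (0:ℝ) < cl / ck := by positivity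
  have hval : cl / ck * (ck ^ 2 / cl ^ 2) ^ ((1:ℝ)/4) = Real.sqrt (cl / ck) := by
    have h1 : ck ^ 2 / cl ^ 2 = (cl / ck) ^ (-2 : ℝ) := by
      rw [show (-2:ℝ) = -((2:ℕ):ℝ) by norm_num, Real.rpow_neg hx.le,
        Real.rpow_natCast]
      rw [div_pow, inv_div]
    rw [h1, ← Real.rpow_mul hx.le]
    nth_rewrite 1 [← Real.rpow_one (cl/ck)]
    rw [← Real.rpow_add hx, Real.sqrt_eq_rpow]
    norm_num
  rw [← hval]
  refine hmain.congr' ?_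
  filter_upwards [Filter.eventually_ge_atTop (0:ℝ)] with t ht
  have hA : (0:ℝ) < 2 * cl ^ 2 * t + k0 := by positivity
  have hB : (0:ℝ) < 2 * ck ^ 2 * t + k0 := by positivity
  rw [Real.div_rpow hB.le hA.le]
  field_simp
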